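/- Let q be a prime power and Δ = ({1,…,ℓ}, 𝓕) a simplicial complex containing every singleton. Suppose e = {i₁,i₂} is a 2-element face of Δ that is maximal, i.e., contained in no strictly larger face. Let Δ∖e be the simplicial complex with face set 𝓕∖{e}, and let Δ/e be the simplicial complex on {1,…,ℓ}∖{i₂} whose faces are the sets σ(F) for F ∈ 𝓕, where σ fixes every point except that it sends i₂ to i₁. Then for every integer t, χ(S_Δ^q, t) = χ(S_{Δ∖e}^q, t) − (q−1)·χ(S_{Δ/e}^q, t). -/

import Mathlib

open Finset
open scoped Classical

/-- The characteristic polynomial of a finite set of (hyper)planes, evaluated at an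
integer `t`:  `χ(A,t) = Σ_{I ⊆ A} (−1)^{|I|} t^{dim ∩_{H ∈ I} H}`, the empty
intersection being the whole space. -/
noncomputable def chi {K V : Type} [Field K] [Fintype V]
    (A : Finset (Submodule K (V → K))) (t : ℤ) : ℤ :=
  ∑ I ∈ A.powerset, (-1) ^ I.card * t ^ (Module.finrank K ↥(I.inf id))
/-- The kernel of the linear form `x ↦ ∑ i, a i * x i`. -/
noncomputable def kerForm {K V : Type} [Field K] [Fintype V] (a : V → K) :
    Submodule K (V → K) :=
  LinearMap.ker (∑ i, a i • (LinearMap.proj i : (V → K) →ₗ[K] K))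

/-- The arrangement `S_Δ^q` attached to a simplicial complex with face set `𝓕`:
all hyperplanes `ker (a_{i₁} x_{i₁} + ⋯ + a_{i_r} x_{i_r})` where `{i₁, …, i_r}`
runs over the nonempty faces and the `a`'s run over the nonzero field elements. -/
noncomputable def SArr (K : Type) [Field K] [Fintype K] {V : Type} [Fintype V]
    (𝓕 : Finset (Finset V)) : Finset (Submodule K (V → K)) :=
  (𝓕.filter fun s => s.Nonempty).biUnion fun s =>
    ((Finset.univ : Finset (V → K)).filter
      (fun a => ∀ i, (i ∈ s → a i ≠ 0) ∧ (i ∉ s → a i = 0))).image kerForm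

/-! ### Combinatorial lemmas -/

lemma aux_insert_zero {β : Type*} [DecidableEq β] (B : Finset β) (b : β) (hb : b ∈ B)
    (h : Finset β → ℤ) :
    ∑ K ∈ B.powerset, (-1 : ℤ) ^ K.card * h (insert b K) = 0 := by
  obtain ⟨B', hbB', rfl⟩ : ∃ B', b ∉ B' ∧ B = insert b B' :=
    ⟨B.erase b, notMem_erase _ _, (insert_erase hb).symm⟩
  rw [Finset.sum_powerset_insert hbB']
  rw [← Finset.sum_add_distrib]
  apply Finset.sum_eq_zero
  intro K hK
  have hbK : b ∉ K := fun h' => hbB' (mem_powerset.mp hK h')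
  rw [Finset.card_insert_of_notMem hbK, Finset.insert_idem]
  ring

lemma aux_pushforward {α β : Type*} [DecidableEq α] [DecidableEq β] (f : α → β)
    (A : Finset α) :
    ∀ g : Finset β → ℤ,
      ∑ J ∈ A.powerset, (-1 : ℤ) ^ J.card * g (J.image f)
        = ∑ K ∈ (A.image f).powerset, (-1 : ℤ) ^ K.card * g K := by
  induction A using Finset.induction_on with
  | empty => simp
  | @insert a s ha ih =>
    intro g
    rw [Finset.sum_powerset_insert ha, ih g, Finset.image_insert]
    have h2 : ∑ J ∈ s.powerset, (-1 : ℤ) ^ (insert a J).card * g ((insert a J).image f)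
        = - ∑ K ∈ (s.image f).powerset, (-1 : ℤ) ^ K.card * g (insert (f a) K) := by
      have : ∀ J ∈ s.powerset, (-1 : ℤ) ^ (insert a J).card * g ((insert a J).image f)
          = - ((-1 : ℤ) ^ J.card * g (insert (f a) (J.image f))) := by
        intro J hJ
        have haJ : a ∉ J := fun h' => ha (mem_powerset.mp hJ h')
        rw [Finset.card_insert_of_notMem haJ, Finset.image_insert]
        ring
      rw [Finset.sum_congr rfl this, Finset.sum_neg_distrib]
      rw [ih (fun K => g (insert (f a) K))]
    rw [h2]
    by_cases hfa : f a ∈ s.image f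
    · rw [Finset.insert_eq_self.mpr hfa, aux_insert_zero _ _ hfa]
      ring
    · rw [Finset.sum_powerset_insert hfa]
      have : ∀ K ∈ (s.image f).powerset,
          (-1 : ℤ) ^ (insert (f a) K).card * g (insert (f a) K)
          = - ((-1 : ℤ) ^ K.card * g (insert (f a) K)) := by
        intro K hK
        have : f a ∉ K := fun h' => hfa (mem_powerset.mp hK h')
        rw [Finset.card_insert_of_notMem this]; ring
      rw [Finset.sum_congr rfl this, Finset.sum_neg_distrib]

/-! ### kerForm basics -/

section Geo
variable {K V : Type} [Field K] [Fintype V]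

lemma mem_kerForm {a x : V → K} : x ∈ kerForm a ↔ ∑ i, a i * x i = 0 := by
  simp [kerForm, LinearMap.mem_ker, LinearMap.sum_apply, LinearMap.smul_apply,
    smul_eq_mul]

lemma single_mem_kerForm {a : V → K} {j : V} :
    (Pi.single j (1 : K)) ∈ kerForm a ↔ a j = 0 := by
  rw [mem_kerForm]
  have : ∀ i, a i * (Pi.single j (1 : K) : V → K) i = if i = j then a j else 0 := by
    intro i
    by_cases h : i = j <;> simp [h, Pi.single_apply]
  rw [Finset.sum_congr rfl (fun i _ => this i), Finset.sum_ite_eq' univ j (fun _ => a j)]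
  simp

lemma kerForm_eq_iff_zero {a b : V → K} (h : kerForm a = kerForm b) (j : V) :
    a j = 0 ↔ b j = 0 := by
  rw [← single_mem_kerForm, ← single_mem_kerForm, h]

lemma kerForm_smul {c : K} (hc : c ≠ 0) (a : V → K) : kerForm (c • a) = kerForm a := by
  ext x
  rw [mem_kerForm, mem_kerForm]
  have : ∑ i, (c • a) i * x i = c * ∑ i, a i * x i := by
    rw [Finset.mul_sum]; exact Finset.sum_congr rfl (fun i _ => by simp [mul_assoc])
  rw [this, mul_eq_zero]
  simp [hc]

lemma mem_SArr {K : Type} [Field K] [Fintype K] {𝓕 : Finset (Finset V)}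
    {H : Submodule K (V → K)} :
    H ∈ SArr K 𝓕 ↔ ∃ a : V → K,
      (univ.filter fun i => a i ≠ 0) ∈ 𝓕 ∧ (∃ j, a j ≠ 0) ∧ H = kerForm a := by
  simp only [SArr, Finset.mem_biUnion, Finset.mem_filter, Finset.mem_image, Finset.mem_univ,
    true_and]
  constructor
  · rintro ⟨s, ⟨hs, hsne⟩, a, ha, rfl⟩
    refine ⟨a, ?_, ?_, rfl⟩
    · have : (univ.filter fun i => a i ≠ 0) = s := by
        ext i
        simp only [Finset.mem_filter, Finset.mem_univ, true_and]
        constructor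
        · intro h; by_contra hi; exact h ((ha i).2 hi)
        · intro h; exact (ha i).1 h
      rwa [this]
    · obtain ⟨j, hj⟩ := hsne
      exact ⟨j, (ha j).1 hj⟩
  · rintro ⟨a, ha, ⟨j, hj⟩, rfl⟩
    refine ⟨univ.filter fun i => a i ≠ 0, ⟨ha, ⟨j, by simp [hj]⟩⟩, a, ?_, rfl⟩
    intro i
    constructor
    · intro h; exact (Finset.mem_filter.mp h).2
    · intro h; by_contra hi; exact h (Finset.mem_filter.mpr ⟨Finset.mem_univ i, hi⟩)

lemma SArr_mono {K : Type} [Field K] [Fintype K] {𝓕₁ 𝓕₂ : Finset (Finset V)}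
    (h : 𝓕₁ ⊆ 𝓕₂) : SArr K 𝓕₁ ⊆ SArr K 𝓕₂ := by
  intro H hH
  rw [mem_SArr] at hH ⊢
  obtain ⟨a, h1, h2, h3⟩ := hH
  exact ⟨a, h h1, h2, h3⟩

end Geo

/-! ### The parametrization `phi` of the hyperplane `x_{i₁} + c x_{i₂} = 0` -/

section Phi
variable {ℓ : ℕ} {F : Type} [Field F] {i₁ i₂ : Fin ℓ} (hne : i₁ ≠ i₂) (c : F) (hc : c ≠ 0)

/-- coefficient vector of the hyperplane `x_{i₁} + c x_{i₂} = 0`. -/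
def hcvec (i₁ i₂ : Fin ℓ) (c : F) : Fin ℓ → F :=
  fun i => if i = i₁ then 1 else if i = i₂ then c else 0

include hne in
lemma sum_hcvec (x : Fin ℓ → F) :
    ∑ i, hcvec i₁ i₂ c i * x i = x i₁ + c * x i₂ := by
  have : ∀ i, hcvec i₁ i₂ c i * x i
      = (if i = i₁ then x i₁ else 0) + (if i = i₂ then c * x i₂ else 0) := by
    intro i
    by_cases h1 : i = i₁
    · subst h1
      simp [hcvec, hne]
    · by_cases h2 : i = i₂
      · subst h2
        simp [hcvec, h1]
      · simp [hcvec, h1, h2]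
  rw [Finset.sum_congr rfl fun i _ => this i, Finset.sum_add_distrib,
    Finset.sum_ite_eq' univ i₁, Finset.sum_ite_eq' univ i₂]
  simp

include hne in
lemma mem_kerForm_hcvec {x : Fin ℓ → F} :
    x ∈ kerForm (hcvec i₁ i₂ c) ↔ x i₁ + c * x i₂ = 0 := by
  rw [mem_kerForm, sum_hcvec hne]

/-- The linear parametrization of the hyperplane `x_{i₁} + c x_{i₂} = 0` by the
coordinates other than `i₂`. -/
noncomputable def phi : ({i : Fin ℓ // i ≠ i₂} → F) →ₗ[F] (Fin ℓ → F) where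
  toFun y i := if h : i = i₂ then -c⁻¹ * y ⟨i₁, hne⟩ else y ⟨i, h⟩
  map_add' y z := by funext i; by_cases h : i = i₂ <;> simp [h] <;> ring
  map_smul' r y := by funext i; by_cases h : i = i₂ <;> simp [h] <;> ring

lemma phi_apply_ne (y : {i : Fin ℓ // i ≠ i₂} → F) (i : Fin ℓ) (h : i ≠ i₂) :
    phi hne c y i = y ⟨i, h⟩ := by simp [phi, h]

lemma phi_apply_i₂ (y : {i : Fin ℓ // i ≠ i₂} → F) :
    phi hne c y i₂ = -c⁻¹ * y ⟨i₁, hne⟩ := by simp [phi]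

lemma phi_injective : Function.Injective (phi hne c) := by
  intro y z h
  funext i'
  have := congrFun h (i' : Fin ℓ)
  rwa [phi_apply_ne hne c y _ i'.2, phi_apply_ne hne c z _ i'.2] at this

lemma range_phi (hc : c ≠ 0) :
    LinearMap.range (phi hne c) = kerForm (hcvec i₁ i₂ c) := by
  ext x
  constructor
  · rintro ⟨y, rfl⟩
    rw [mem_kerForm_hcvec hne]
    rw [phi_apply_ne hne c y i₁ hne, phi_apply_i₂ hne c]
    field_simp
    ring
  · intro hx
    rw [mem_kerForm_hcvec hne] at hx
    refine ⟨fun i' => x i', ?_⟩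
    funext i
    by_cases h : i = i₂
    · subst h
      rw [phi_apply_i₂ hne c]
      rw [eq_neg_of_add_eq_zero_left hx]
      field_simp
    · rw [phi_apply_ne hne c _ i h]

/-- Contraction of a coefficient vector along `phi`. -/
noncomputable def contract (i₁ : Fin ℓ) (c : F) (a : Fin ℓ → F) :
    {i : Fin ℓ // i ≠ i₂} → F :=
  fun i' => if (i' : Fin ℓ) = i₁ then a i₁ - a i₂ * c⁻¹ else a i'

lemma sum_split (g : Fin ℓ → F) :
    ∑ i, g i = (∑ i' : {i : Fin ℓ // i ≠ i₂}, g i') + g i₂ := by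
  rw [← Finset.sum_erase_add univ g (Finset.mem_univ i₂)]
  congr 1
  exact Finset.sum_subtype (univ.erase i₂) (fun x => by simp) g

lemma sum_contract (a : Fin ℓ → F) (y : {i : Fin ℓ // i ≠ i₂} → F) :
    ∑ i, a i * phi hne c y i = ∑ i', contract i₁ c a i' * y i' := by
  rw [sum_split (fun i => a i * phi hne c y i)]
  have h1 : ∀ i' : {i : Fin ℓ // i ≠ i₂}, a i' * phi hne c y i' = a i' * y i' := by
    intro i'; rw [phi_apply_ne hne c y _ i'.2]
  have h2 : ∀ i' : {i : Fin ℓ // i ≠ i₂}, contract i₁ c a i' * y i'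
      = a i' * y i' + (if i' = (⟨i₁, hne⟩ : {i : Fin ℓ // i ≠ i₂})
          then -(a i₂ * c⁻¹) * y ⟨i₁, hne⟩ else 0) := by
    intro i'
    by_cases h : i' = (⟨i₁, hne⟩ : {i : Fin ℓ // i ≠ i₂})
    · subst h; simp [contract]; ring
    · have : (i' : Fin ℓ) ≠ i₁ := fun hh => h (Subtype.ext hh)
      simp [contract, this, h]
  rw [Finset.sum_congr rfl fun i' _ => h1 i', Finset.sum_congr rfl fun i' _ => h2 i',
    Finset.sum_add_distrib, Finset.sum_ite_eq' univ (⟨i₁, hne⟩ : {i : Fin ℓ // i ≠ i₂})]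
  rw [phi_apply_i₂ hne c]
  simp
  ring

lemma comap_phi_kerForm (a : Fin ℓ → F) :
    Submodule.comap (phi hne c) (kerForm a) = kerForm (contract i₁ c a) := by
  ext y
  rw [Submodule.mem_comap, mem_kerForm, mem_kerForm, sum_contract hne c]

end Phi

/-! ### rank and chi lemmas -/

section Rank
variable {K M N : Type} [Field K] [AddCommGroup M] [Module K M]
  [AddCommGroup N] [Module K N]

lemma finrank_comap_eq (φ : M →ₗ[K] N) (hφ : Function.Injective φ) (W : Submodule K N) :
    Module.finrank K ↥(Submodule.comap φ W) = Module.finrank K ↥(W ⊓ LinearMap.range φ) := by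
  rw [(Submodule.equivMapOfInjective φ hφ (Submodule.comap φ W)).finrank_eq,
    Submodule.map_comap_eq, inf_comm]

lemma comap_finset_inf (φ : M →ₗ[K] N) (J : Finset (Submodule K N)) :
    Submodule.comap φ (J.inf id) = (J.image (Submodule.comap φ)).inf id := by
  induction J using Finset.induction_on with
  | empty => simp
  | @insert H J hHJ ih =>
    rw [Finset.image_insert, Finset.inf_insert, Finset.inf_insert, Submodule.comap_inf, ih]
    rfl
end Rank

section Chi
variable {K V : Type} [Field K] [Fintype V]

lemma chi_insert (H : Submodule K (V → K)) (B : Finset (Submodule K (V → K)))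
    (hHB : H ∉ B) (t : ℤ) :
    chi (insert H B) t
      = chi B t - ∑ J ∈ B.powerset,
          (-1 : ℤ) ^ J.card * t ^ (Module.finrank K ↥(J.inf id ⊓ H)) := by
  rw [chi, Finset.sum_powerset_insert hHB]
  have key : ∀ J ∈ B.powerset,
      (-1:ℤ)^(insert H J).card * t ^ (Module.finrank K ↥((insert H J).inf id))
      = -((-1:ℤ)^J.card * t ^ (Module.finrank K ↥(J.inf id ⊓ H))) := by
    intro J hJ
    have hHJ : H ∉ J := fun h => hHB (mem_powerset.mp hJ h)
    rw [Finset.card_insert_of_notMem hHJ, Finset.inf_insert]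
    simp only [id_eq]
    rw [(LinearEquiv.ofEq (H ⊓ J.inf id) (J.inf id ⊓ H) (inf_comm _ _)).finrank_eq]
    ring
  rw [Finset.sum_congr rfl key, Finset.sum_neg_distrib, chi]
  ring

end Chi

/-! ### The main setting -/

section Main
variable {ℓ : ℕ} {F : Type} [Field F] [Fintype F]
  {i₁ i₂ : Fin ℓ} (hne : i₁ ≠ i₂) (c : F) (hc : c ≠ 0)
  {𝓕 : Finset (Finset (Fin ℓ))}

def sgm (i₁ i₂ : Fin ℓ) : Fin ℓ → Fin ℓ := fun i => if i = i₂ then i₁ else i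

lemma supp_spec {α K : Type} [Fintype α] [Field K] {a : α → K} {s : Finset α}
    (h : univ.filter (fun i => a i ≠ 0) = s) : ∀ i, a i ≠ 0 ↔ i ∈ s := by
  intro i; rw [← h]; simp

include hne in
lemma sgm_ne_i₂ (j : Fin ℓ) : sgm i₁ i₂ j ≠ i₂ := by
  unfold sgm
  by_cases h : j = i₂ <;> simp [h, hne]

lemma mem_image_sgm {s : Finset (Fin ℓ)} {i : Fin ℓ} (h1 : i ≠ i₁) (h2 : i ≠ i₂) :
    i ∈ s.image (sgm i₁ i₂) ↔ i ∈ s := by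
  simp only [Finset.mem_image]
  constructor
  · rintro ⟨j, hj, rfl⟩
    by_cases h : j = i₂
    · exact absurd (by simp [sgm, h]) h1
    · simpa [sgm, h] using hj
  · intro h
    exact ⟨i, h, by simp [sgm, h2]⟩

include hne in
lemma i₁_mem_image_sgm {s : Finset (Fin ℓ)} :
    i₁ ∈ s.image (sgm i₁ i₂) ↔ (i₁ ∈ s ∨ i₂ ∈ s) := by
  simp only [Finset.mem_image]
  constructor
  · rintro ⟨j, hj, hj'⟩
    by_cases h : j = i₂
    · exact Or.inr (h ▸ hj)
    · left; simp only [sgm, if_neg h] at hj'; rwa [← hj']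
  · rintro (h | h)
    · exact ⟨i₁, h, by simp [sgm, hne]⟩
    · exact ⟨i₂, h, by simp [sgm]⟩

include hne hc in
lemma supp_hcvec :
    univ.filter (fun i => hcvec i₁ i₂ c i ≠ 0) = ({i₁, i₂} : Finset (Fin ℓ)) := by
  ext i
  simp only [Finset.mem_filter, Finset.mem_univ, true_and, Finset.mem_insert,
    Finset.mem_singleton]
  by_cases h1 : i = i₁
  · simp [hcvec, h1]
  · by_cases h2 : i = i₂
    · simp [hcvec, h1, h2, hc, hne.symm]
    · simp [hcvec, h1, h2]

include hne hc in
lemma hc_mem_SArr (he : ({i₁, i₂} : Finset (Fin ℓ)) ∈ 𝓕) :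
    kerForm (hcvec i₁ i₂ c) ∈ SArr F 𝓕 := by
  rw [mem_SArr]
  refine ⟨hcvec i₁ i₂ c, ?_, ⟨i₁, by simp [hcvec]⟩, rfl⟩
  rw [supp_hcvec hne c hc]
  exact he

include hne hc in
lemma hc_not_mem_erase :
    kerForm (hcvec i₁ i₂ c) ∉ SArr F (𝓕.erase ({i₁, i₂} : Finset (Fin ℓ))) := by
  intro hmem
  rw [mem_SArr] at hmem
  obtain ⟨a, hs, -, hker⟩ := hmem
  have : (univ.filter fun i => a i ≠ 0) = ({i₁, i₂} : Finset (Fin ℓ)) := by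
    rw [← supp_hcvec hne c hc]
    ext i
    simp only [Finset.mem_filter, Finset.mem_univ, true_and]
    exact not_congr (kerForm_eq_iff_zero hker.symm i)
  rw [this] at hs
  exact (Finset.notMem_erase _ _) hs

include hne in
lemma SArr_decomp (he : ({i₁, i₂} : Finset (Fin ℓ)) ∈ 𝓕) :
    SArr F 𝓕 = SArr F (𝓕.erase ({i₁, i₂} : Finset (Fin ℓ)))
      ∪ ((univ.filter fun c : F => c ≠ 0).image fun c => kerForm (hcvec i₁ i₂ c)) := by
  apply Finset.Subset.antisymm
  · intro H hH
    rw [mem_SArr] at hH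
    obtain ⟨a, hs, ⟨j, hj⟩, rfl⟩ := hH
    by_cases hcase : (univ.filter fun i => a i ≠ 0) = ({i₁, i₂} : Finset (Fin ℓ))
    · have hspec := supp_spec hcase
      have ha1 : a i₁ ≠ 0 := (hspec i₁).mpr (by simp)
      have ha2 : a i₂ ≠ 0 := (hspec i₂).mpr (by simp)
      have hc0 : a i₂ * (a i₁)⁻¹ ≠ 0 := mul_ne_zero ha2 (inv_ne_zero ha1)
      apply Finset.mem_union_right
      rw [Finset.mem_image]
      refine ⟨a i₂ * (a i₁)⁻¹, by simp [hc0], ?_⟩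
      have haeq : a = (a i₁) • hcvec i₁ i₂ (a i₂ * (a i₁)⁻¹) := by
        funext i
        by_cases h1 : i = i₁
        · simp [h1, hcvec]
        · by_cases h2 : i = i₂
          · subst h2
            simp only [Pi.smul_apply, hcvec, if_neg h1, if_pos rfl, smul_eq_mul,
              eq_self_iff_true, if_true]
            field_simp
          · have : a i = 0 := by
              by_contra hh
              rcases Finset.mem_insert.mp ((hspec i).mp hh) with h | h
              · exact h1 h
              · exact h2 (Finset.mem_singleton.mp h)
            simp [this, hcvec, h1, h2]
      exact ((congrArg kerForm haeq).trans (kerForm_smul ha1 _)).symm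
    · apply Finset.mem_union_left
      rw [mem_SArr]
      exact ⟨a, Finset.mem_erase.mpr ⟨hcase, hs⟩, ⟨j, hj⟩, rfl⟩
  · apply Finset.union_subset
    · exact SArr_mono (Finset.erase_subset _ _)
    · intro H hH
      rw [Finset.mem_image] at hH
      obtain ⟨c, hcmem, rfl⟩ := hH
      exact hc_mem_SArr hne c (by simpa using hcmem) he

include hne in
lemma card_Ec :
    ((univ.filter fun c : F => c ≠ 0).image fun c => kerForm (hcvec i₁ i₂ c)).card
      = Fintype.card F - 1 := by
  rw [Finset.card_image_of_injOn, Finset.filter_ne', Finset.card_erase_of_mem (mem_univ 0),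
    Finset.card_univ]
  intro c hcm c' hcm' hker
  have hker' : kerForm (hcvec i₁ i₂ c) = kerForm (hcvec i₁ i₂ c') := hker
  set x : Fin ℓ → F := fun i => if i = i₁ then -c else if i = i₂ then 1 else 0 with hx
  have hx1 : x i₁ = -c := by simp [hx]
  have hx2 : x i₂ = 1 := by simp [hx, hne.symm]
  have hmem : x ∈ kerForm (hcvec i₁ i₂ c) := by
    rw [mem_kerForm_hcvec hne, hx1, hx2]; ring
  rw [hker', mem_kerForm_hcvec hne, hx1, hx2] at hmem
  linear_combination -hmem

end Main

section Main2
variable {ℓ : ℕ} {F : Type} [Field F] [Fintype F]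
  {i₁ i₂ : Fin ℓ} (hne : i₁ ≠ i₂) (c : F) (hc : c ≠ 0)
  {𝓕 : Finset (Finset (Fin ℓ))}

include hne hc in
lemma supp_contract (hmax : ∀ s ∈ 𝓕, ({i₁, i₂} : Finset (Fin ℓ)) ⊆ s → s = {i₁, i₂})
    {a : Fin ℓ → F} {s : Finset (Fin ℓ)} (hs : s ∈ 𝓕)
    (hsupp : univ.filter (fun i => a i ≠ 0) = s)
    (hker : kerForm a ≠ kerForm (hcvec i₁ i₂ c)) :
    univ.filter (fun i' : {i : Fin ℓ // i ≠ i₂} => contract i₁ c a i' ≠ 0)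
      = (s.image (sgm i₁ i₂)).subtype (fun i => i ≠ i₂) := by
  have ha := supp_spec hsupp
  ext i'
  simp only [Finset.mem_filter, Finset.mem_univ, true_and, Finset.mem_subtype]
  by_cases h : (i' : Fin ℓ) = i₁
  · rw [h, i₁_mem_image_sgm hne]
    simp only [contract, if_pos h]
    by_cases h1 : i₁ ∈ s
    · by_cases h2 : i₂ ∈ s
      · have hse : s = ({i₁, i₂} : Finset (Fin ℓ)) :=
          hmax s hs (Finset.insert_subset h1 (Finset.singleton_subset_iff.mpr h2))
        have hnz : a i₁ - a i₂ * c⁻¹ ≠ 0 := by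
          intro h0
          apply hker
          have ha1 : a i₁ ≠ 0 := (ha i₁).mpr h1
          have haeq : a = (a i₁) • hcvec i₁ i₂ c := by
            funext i
            by_cases hh1 : i = i₁
            · simp [hh1, hcvec]
            · by_cases hh2 : i = i₂
              · rw [hh2]
                have hx : a i₁ = a i₂ * c⁻¹ := by linear_combination h0
                simp only [Pi.smul_apply, hcvec, if_neg (Ne.symm hne), if_pos rfl,
                  smul_eq_mul, eq_self_iff_true, if_true]
                rw [hx]
                field_simp
              · have : a i = 0 := by
                  by_contra hh
                  have := (ha i).mp hh
                  rw [hse] at this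
                  rcases Finset.mem_insert.mp this with h | h
                  · exact hh1 h
                  · exact hh2 (Finset.mem_singleton.mp h)
                simp [this, hcvec, hh1, hh2]
          exact (congrArg kerForm haeq).trans (kerForm_smul ha1 _)
        simp [hnz, h1]
      · have ha2 : a i₂ = 0 := by
          by_contra hh; exact h2 ((ha i₂).mp hh)
        have ha1 : a i₁ ≠ 0 := (ha i₁).mpr h1
        simp [ha2, ha1, h1]
    · by_cases h2 : i₂ ∈ s
      · have ha1 : a i₁ = 0 := by
          by_contra hh; exact h1 ((ha i₁).mp hh)
        have ha2 : a i₂ ≠ 0 := (ha i₂).mpr h2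
        have : a i₁ - a i₂ * c⁻¹ ≠ 0 := by
          rw [ha1, zero_sub, neg_ne_zero]
          exact mul_ne_zero ha2 (inv_ne_zero hc)
        simp [this, h2]
      · have ha1 : a i₁ = 0 := by
          by_contra hh; exact h1 ((ha i₁).mp hh)
        have ha2 : a i₂ = 0 := by
          by_contra hh; exact h2 ((ha i₂).mp hh)
        simp [ha1, ha2, h1, h2]
  · simp only [contract, if_neg h]
    rw [mem_image_sgm h i'.2]
    exact ha _

include hne hc in
lemma fc_mem (hmax : ∀ s ∈ 𝓕, ({i₁, i₂} : Finset (Fin ℓ)) ⊆ s → s = {i₁, i₂})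
    {H : Submodule F (Fin ℓ → F)} (hH : H ∈ SArr F 𝓕)
    (hHne : H ≠ kerForm (hcvec i₁ i₂ c)) :
    Submodule.comap (phi hne c) H
      ∈ SArr F (𝓕.image fun s => (s.image (sgm i₁ i₂)).subtype fun i => i ≠ i₂) := by
  rw [mem_SArr] at hH
  obtain ⟨a, ha𝓕, ⟨j, hj⟩, rfl⟩ := hH
  rw [comap_phi_kerForm hne c, mem_SArr]
  have hsc := supp_contract hne c hc hmax ha𝓕 rfl hHne
  refine ⟨contract i₁ c a, ?_, ?_, rfl⟩
  · rw [hsc]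
    exact Finset.mem_image_of_mem _ ha𝓕
  · have hjmem : (⟨sgm i₁ i₂ j, sgm_ne_i₂ hne j⟩ : {i : Fin ℓ // i ≠ i₂})
        ∈ ((univ.filter (fun i => a i ≠ 0)).image (sgm i₁ i₂)).subtype (fun i => i ≠ i₂) := by
      rw [Finset.mem_subtype]
      exact Finset.mem_image_of_mem _ (by simp [hj])
    rw [← hsc] at hjmem
    exact ⟨_, (Finset.mem_filter.mp hjmem).2⟩

include hne hc in
lemma fc_surj (hsingle : ∀ i : Fin ℓ, ({i} : Finset (Fin ℓ)) ∈ 𝓕)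
    (hmax : ∀ s ∈ 𝓕, ({i₁, i₂} : Finset (Fin ℓ)) ⊆ s → s = {i₁, i₂})
    {H'' : Submodule F ({i : Fin ℓ // i ≠ i₂} → F)}
    (hH'' : H'' ∈ SArr F (𝓕.image fun s => (s.image (sgm i₁ i₂)).subtype fun i => i ≠ i₂)) :
    ∃ H ∈ SArr F (𝓕.erase ({i₁, i₂} : Finset (Fin ℓ))),
      Submodule.comap (phi hne c) H = H'' := by
  rw [mem_SArr] at hH''
  obtain ⟨b, hb𝓕, ⟨j', hj'⟩, rfl⟩ := hH''
  rw [Finset.mem_image] at hb𝓕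
  obtain ⟨s, hs, hss⟩ := hb𝓕
  -- replace s so that it does not contain both i₁ and i₂
  obtain ⟨s₀, hs₀, h21, hss₀⟩ : ∃ s₀ ∈ 𝓕, (i₂ ∈ s₀ → i₁ ∉ s₀) ∧
      (s₀.image (sgm i₁ i₂)).subtype (fun i => i ≠ i₂)
        = univ.filter (fun i' : {i : Fin ℓ // i ≠ i₂} => b i' ≠ 0) := by
    by_cases hboth : i₁ ∈ s ∧ i₂ ∈ s
    · have hse : s = ({i₁, i₂} : Finset (Fin ℓ)) :=
        hmax s hs (Finset.insert_subset hboth.1 (Finset.singleton_subset_iff.mpr hboth.2))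
      refine ⟨{i₂}, hsingle i₂, fun _ => by simpa using hne, ?_⟩
      rw [← hss]
      congr 1
      rw [hse]
      rw [show ({i₂} : Finset (Fin ℓ)).image (sgm i₁ i₂) = {i₁} by simp [sgm],
        show ({i₁, i₂} : Finset (Fin ℓ)).image (sgm i₁ i₂) = {i₁} by
          rw [Finset.image_insert, Finset.image_singleton]
          simp [sgm, hne]]
    · refine ⟨s, hs, fun h2 h1 => hboth ⟨h1, h2⟩, hss⟩
  have hb : ∀ i' : {i : Fin ℓ // i ≠ i₂}, b i' ≠ 0 ↔ (i' : Fin ℓ) ∈ s₀.image (sgm i₁ i₂) := by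
    intro i'
    have h1 : i' ∈ univ.filter (fun i' : {i : Fin ℓ // i ≠ i₂} => b i' ≠ 0)
        ↔ (i' : Fin ℓ) ∈ s₀.image (sgm i₁ i₂) := by
      rw [← hss₀, Finset.mem_subtype]
    simpa using h1.symm.symm
  by_cases hi2 : i₂ ∈ s₀
  · have hi1 : i₁ ∉ s₀ := h21 hi2
    have hbi₁ : b ⟨i₁, hne⟩ ≠ 0 :=
      (hb _).mpr ((i₁_mem_image_sgm hne).mpr (Or.inr hi2))
    set a : Fin ℓ → F :=
      fun i => if h : i = i₂ then -c * b ⟨i₁, hne⟩ else if i = i₁ then 0 else b ⟨i, h⟩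
      with hadef
    have hai₂ : a i₂ = -c * b ⟨i₁, hne⟩ := by simp [hadef]
    have hai₁ : a i₁ = 0 := by simp [hadef, hne]
    have haother : ∀ (i : Fin ℓ) (h2 : i ≠ i₂), i ≠ i₁ → a i = b ⟨i, h2⟩ := by
      intro i h2 h1
      simp [hadef, h2, h1]
    have hai₂ne : a i₂ ≠ 0 := by
      rw [hai₂]; exact mul_ne_zero (neg_ne_zero.mpr hc) hbi₁
    have hsupp : univ.filter (fun i => a i ≠ 0) = s₀ := by
      ext i
      simp only [Finset.mem_filter, Finset.mem_univ, true_and]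
      by_cases h2 : i = i₂
      · subst h2
        exact iff_of_true hai₂ne hi2
      · by_cases h1 : i = i₁
        · subst h1
          exact iff_of_false (by rw [hai₁]; simp) hi1
        · rw [haother i h2 h1, hb ⟨i, h2⟩]
          exact mem_image_sgm h1 h2
    refine ⟨kerForm a, ?_, ?_⟩
    · rw [mem_SArr]
      refine ⟨a, ?_, ⟨i₂, hai₂ne⟩, rfl⟩
      rw [hsupp]
      refine Finset.mem_erase.mpr ⟨fun hh => hi1 ?_, hs₀⟩
      · rw [hh]; simp
    · rw [comap_phi_kerForm hne c]
      congr 1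
      funext i'
      by_cases h : (i' : Fin ℓ) = i₁
      · have hi' : i' = ⟨i₁, hne⟩ := Subtype.ext h
        subst hi'
        show (if ((⟨i₁, hne⟩ : {i : Fin ℓ // i ≠ i₂}) : Fin ℓ) = i₁
          then a i₁ - a i₂ * c⁻¹ else a ((⟨i₁, hne⟩ : {i : Fin ℓ // i ≠ i₂}) : Fin ℓ)) = _
        rw [if_pos rfl, hai₁, hai₂]
        field_simp
        ring
      · show (if (i' : Fin ℓ) = i₁ then a i₁ - a i₂ * c⁻¹ else a (i' : Fin ℓ)) = b i'
        rw [if_neg h]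
        exact haother _ i'.2 h
  · have himg : s₀.image (sgm i₁ i₂) = s₀ := by
      ext i
      simp only [Finset.mem_image]
      constructor
      · rintro ⟨j, hj, rfl⟩
        have hj2 : j ≠ i₂ := fun hh => hi2 (hh ▸ hj)
        simpa [sgm, hj2] using hj
      · intro hi
        have hi2' : i ≠ i₂ := fun hh => hi2 (hh ▸ hi)
        exact ⟨i, hi, by simp [sgm, hi2']⟩
    set a : Fin ℓ → F := fun i => if h : i = i₂ then 0 else b ⟨i, h⟩ with hadef
    have haother : ∀ (i : Fin ℓ) (h2 : i ≠ i₂), a i = b ⟨i, h2⟩ := by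
      intro i h2; simp [hadef, h2]
    have hsupp : univ.filter (fun i => a i ≠ 0) = s₀ := by
      ext i
      simp only [Finset.mem_filter, Finset.mem_univ, true_and]
      by_cases h2 : i = i₂
      · subst h2
        exact iff_of_false (by simp [hadef]) hi2
      · rw [haother i h2, hb ⟨i, h2⟩, himg]
    refine ⟨kerForm a, ?_, ?_⟩
    · rw [mem_SArr]
      refine ⟨a, ?_, ⟨(j' : Fin ℓ), by rw [haother _ j'.2]; exact hj'⟩, rfl⟩
      rw [hsupp]
      refine Finset.mem_erase.mpr ⟨fun hh => hi2 ?_, hs₀⟩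
      · rw [hh]; simp
    · rw [comap_phi_kerForm hne c]
      congr 1
      funext i'
      by_cases h : (i' : Fin ℓ) = i₁
      · have hi' : i' = ⟨i₁, hne⟩ := Subtype.ext h
        subst hi'
        show (if ((⟨i₁, hne⟩ : {i : Fin ℓ // i ≠ i₂}) : Fin ℓ) = i₁
          then a i₁ - a i₂ * c⁻¹ else a ((⟨i₁, hne⟩ : {i : Fin ℓ // i ≠ i₂}) : Fin ℓ)) = _
        rw [if_pos rfl, haother i₁ hne]
        have : a i₂ = 0 := by simp [hadef]
        rw [this]
        ring
      · show (if (i' : Fin ℓ) = i₁ then a i₁ - a i₂ * c⁻¹ else a (i' : Fin ℓ)) = b i'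
        rw [if_neg h]
        exact haother _ i'.2

end Main2

set_option maxHeartbeats 1600000 in
/-- q-deletion-contraction.  If `e = {i₁,i₂}` is a maximal 2-element
face of the simplicial complex `Δ`, then
`χ(S_Δ^q, t) = χ(S_{Δ∖e}^q, t) − (q−1)·χ(S_{Δ/e}^q, t)`, where `Δ/e` is the complex on
`{1,…,ℓ}∖{i₂}` whose faces are the images `σ(F)`, `σ` sending `i₂` to `i₁` and fixing
everything else. -/
theorem stmt1 (ℓ : ℕ) (F : Type) [Field F] [Fintype F] (q : ℕ)
    (hq : Fintype.card F = q)
    (𝓕 : Finset (Finset (Fin ℓ)))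
    (hdown : ∀ s ∈ 𝓕, ∀ t ⊆ s, t ∈ 𝓕)
    (hsingle : ∀ i : Fin ℓ, ({i} : Finset (Fin ℓ)) ∈ 𝓕)
    (i₁ i₂ : Fin ℓ) (hne : i₁ ≠ i₂)
    (he : ({i₁, i₂} : Finset (Fin ℓ)) ∈ 𝓕)
    (hmax : ∀ s ∈ 𝓕, ({i₁, i₂} : Finset (Fin ℓ)) ⊆ s → s = {i₁, i₂})
    (t : ℤ) :
    chi (SArr F 𝓕) t
      = chi (SArr F (𝓕.erase {i₁, i₂})) t
        - ((q : ℤ) - 1) *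
          chi (SArr F (𝓕.image fun s : Finset (Fin ℓ) =>
            (s.image fun i => if i = i₂ then i₁ else i).subtype
              fun i => i ≠ i₂)) t := by
  have hq1 : 1 ≤ q := hq ▸ Fintype.card_pos
  show chi (SArr F 𝓕) t
      = chi (SArr F (𝓕.erase {i₁, i₂})) t
        - ((q : ℤ) - 1) *
          chi (SArr F (𝓕.image fun s : Finset (Fin ℓ) =>
            (s.image (sgm i₁ i₂)).subtype fun i => i ≠ i₂)) t
  have key : ∀ c : F, c ≠ 0 → ∀ B : Finset (Submodule F (Fin ℓ → F)),
      (∀ H ∈ B, H ∈ SArr F 𝓕 ∧ H ≠ kerForm (hcvec i₁ i₂ c)) →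
      SArr F (𝓕.erase ({i₁, i₂} : Finset (Fin ℓ))) ⊆ B →
      kerForm (hcvec i₁ i₂ c) ∉ B →
      chi (insert (kerForm (hcvec i₁ i₂ c)) B) t = chi B t
        - chi (SArr F (𝓕.image fun s : Finset (Fin ℓ) =>
            (s.image (sgm i₁ i₂)).subtype fun i => i ≠ i₂)) t := by
    intro c hc B hB hA'B hnotin
    rw [chi_insert _ _ hnotin t]
    congr 1
    have himage : B.image (Submodule.comap (phi hne c))
        = SArr F (𝓕.image fun s : Finset (Fin ℓ) =>
            (s.image (sgm i₁ i₂)).subtype fun i => i ≠ i₂) := by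
      apply Finset.Subset.antisymm
      · intro H'' hH''
        rw [Finset.mem_image] at hH''
        obtain ⟨H, hHB, rfl⟩ := hH''
        exact fc_mem hne c hc hmax (hB H hHB).1 (hB H hHB).2
      · intro H'' hH''
        obtain ⟨H, hH, hcomap⟩ := fc_surj hne c hc hsingle hmax hH''
        rw [Finset.mem_image]
        exact ⟨H, hA'B hH, hcomap⟩
    calc ∑ J ∈ B.powerset,
          (-1:ℤ)^J.card * t ^ Module.finrank F ↥(J.inf id ⊓ kerForm (hcvec i₁ i₂ c))
        = ∑ J ∈ B.powerset, (-1:ℤ)^J.card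
            * (fun K : Finset (Submodule F ({i : Fin ℓ // i ≠ i₂} → F)) =>
                t ^ Module.finrank F ↥(K.inf id))
              (J.image (Submodule.comap (phi hne c))) := by
          refine Finset.sum_congr rfl fun J _ => ?_
          have : Module.finrank F ↥(J.inf id ⊓ kerForm (hcvec i₁ i₂ c))
              = Module.finrank F
                  ↥((J.image (Submodule.comap (phi hne c))).inf id) := by
            rw [← range_phi hne c hc, ← finrank_comap_eq _ (phi_injective hne c),
              comap_finset_inf]
          rw [this]
      _ = ∑ K ∈ (B.image (Submodule.comap (phi hne c))).powerset, (-1:ℤ)^K.card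
            * (fun K : Finset (Submodule F ({i : Fin ℓ // i ≠ i₂} → F)) =>
                t ^ Module.finrank F ↥(K.inf id)) K :=
          aux_pushforward (Submodule.comap (phi hne c)) B
            (fun K => t ^ Module.finrank F ↥(K.inf id))
      _ = chi (SArr F (𝓕.image fun s : Finset (Fin ℓ) =>
            (s.image (sgm i₁ i₂)).subtype fun i => i ≠ i₂)) t := by
          rw [himage]
          rfl
  have main : ∀ E₀ : Finset (Submodule F (Fin ℓ → F)),
      E₀ ⊆ ((univ.filter fun c : F => c ≠ 0).image fun c => kerForm (hcvec i₁ i₂ c)) →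
      chi (SArr F (𝓕.erase ({i₁, i₂} : Finset (Fin ℓ))) ∪ E₀) t
        = chi (SArr F (𝓕.erase ({i₁, i₂} : Finset (Fin ℓ)))) t
          - (E₀.card : ℤ) * chi (SArr F (𝓕.image fun s : Finset (Fin ℓ) =>
              (s.image (sgm i₁ i₂)).subtype fun i => i ≠ i₂)) t := by
    intro E₀
    induction E₀ using Finset.induction_on with
    | empty => intro _; simp
    | @insert H E₁ hHE₁ ih =>
      intro hsub
      have hHmem : H ∈ ((univ.filter fun c : F => c ≠ 0).image
          fun c => kerForm (hcvec i₁ i₂ c)) := hsub (Finset.mem_insert_self _ _)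
      have hE₁ : E₁ ⊆ ((univ.filter fun c : F => c ≠ 0).image
          fun c => kerForm (hcvec i₁ i₂ c)) := fun x hx => hsub (Finset.mem_insert_of_mem hx)
      rw [Finset.mem_image] at hHmem
      obtain ⟨c, hcm, rfl⟩ := hHmem
      have hc : c ≠ 0 := by simpa using (Finset.mem_filter.mp hcm).2
      have hnotin : kerForm (hcvec i₁ i₂ c)
          ∉ SArr F (𝓕.erase ({i₁, i₂} : Finset (Fin ℓ))) ∪ E₁ := by
        rw [Finset.mem_union]
        rintro (h | h)
        · exact hc_not_mem_erase hne c hc h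
        · exact hHE₁ h
      have hBcond : ∀ H' ∈ SArr F (𝓕.erase ({i₁, i₂} : Finset (Fin ℓ))) ∪ E₁,
          H' ∈ SArr F 𝓕 ∧ H' ≠ kerForm (hcvec i₁ i₂ c) := by
        intro H' hH'
        rcases Finset.mem_union.mp hH' with h | h
        · exact ⟨SArr_mono (Finset.erase_subset _ _) h,
            fun he' => hc_not_mem_erase hne c hc (he' ▸ h)⟩
        · constructor
          · have h2 := hE₁ h
            rw [Finset.mem_image] at h2
            obtain ⟨c', hc'm, rfl⟩ := h2
            exact hc_mem_SArr hne c' (by simpa using (Finset.mem_filter.mp hc'm).2) he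
          · exact fun he' => hHE₁ (he' ▸ h)
      rw [Finset.union_insert,
        key c hc _ hBcond Finset.subset_union_left hnotin,
        ih hE₁, Finset.card_insert_of_notMem hHE₁]
      push_cast
      ring
  rw [SArr_decomp hne he, main _ (subset_refl _), card_Ec hne, hq]
  have hcast : ((q - 1 : ℕ) : ℤ) = (q : ℤ) - 1 := by
    rw [Nat.cast_sub hq1]
    simp
  rw [hcast]
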